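/- Suppose the metrics g and ĝ on U satisfy g = ĝλ for a smooth matrix-valued field λ, P is a g-orthogonal projection, and the kinetic-energy matching condition P(∇_X X − ∇̂_X X) = 0 holds at every point of U for every smooth vector field X. Then for all smooth vector fields X and Z on U, (λPX)^i ∂_i(ĝ(Z,Z)) + 2 ĝ([Z, λPX], Z) = 2 Z^i ∂_i(g(PX,Z)) − 2 g(PX, ∇_Z Z) at every point of U, where [Y,W]^k = Y^i ∂_i W^k − W^i ∂_i Y^k is the Lie bracket, ĝ(Y,W) = ĝ_{ij}Y^iW^j, and g(Y,W) = g_{ij}Y^iW^j. -/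

import Mathlib

/-!
Statement 1 (Proposition 2 of Auckly–Kapitanski–White): if `g = ĝ λ` and the
kinetic-energy matching condition holds, then
`(λPX)^i ∂_i(ĝ(Z,Z)) + 2 ĝ([Z, λPX], Z) = 2 Z^i ∂_i(g(PX,Z)) − 2 g(PX, ∇_Z Z)`.
-/

noncomputable section

open Matrix

/-- Partial derivative of a scalar function in the `i`-th coordinate direction. -/
def pderiv' {n : ℕ} (f : (Fin n → ℝ) → ℝ) (i : Fin n) (x : Fin n → ℝ) : ℝ :=
  fderiv ℝ f x (Pi.single i 1)

/-- Christoffel symbols `Γ^k_{ij}` of a metric `g`. -/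
def christoffel {n : ℕ} (g : (Fin n → ℝ) → Matrix (Fin n) (Fin n) ℝ)
    (k i j : Fin n) (x : Fin n → ℝ) : ℝ :=
  (1 / 2) * ∑ l, (g x)⁻¹ k l *
    (pderiv' (fun y => g y j l) i x + pderiv' (fun y => g y i l) j x -
      pderiv' (fun y => g y i j) l x)

/-- Covariant derivative `(∇_X Y)^k` of the vector field `Y` along `X`. -/
def covDeriv' {n : ℕ} (g : (Fin n → ℝ) → Matrix (Fin n) (Fin n) ℝ)
    (X Y : (Fin n → ℝ) → Fin n → ℝ) (x : Fin n → ℝ) (k : Fin n) : ℝ :=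
  (∑ i, X x i * pderiv' (fun y => Y y k) i x) +
    ∑ i, ∑ j, christoffel g k i j x * X x i * Y x j

/-- Pointwise application of a matrix-valued field to a vector field. -/
def mvec {n : ℕ} (A : (Fin n → ℝ) → Matrix (Fin n) (Fin n) ℝ)
    (X : (Fin n → ℝ) → Fin n → ℝ) (x : Fin n → ℝ) (i : Fin n) : ℝ :=
  ∑ j, A x i j * X x j

/-- Inner product `g(X, Y) = g_{ij} X^i Y^j` of two vector fields. -/
def gip {n : ℕ} (g : (Fin n → ℝ) → Matrix (Fin n) (Fin n) ℝ)
    (X Y : (Fin n → ℝ) → Fin n → ℝ) (x : Fin n → ℝ) : ℝ :=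
  ∑ i, ∑ j, g x i j * X x i * Y x j

/-- Lie bracket `[X, Y]^k = X^i ∂_i Y^k − Y^i ∂_i X^k` of two vector fields. -/
def lieBracket' {n : ℕ} (X Y : (Fin n → ℝ) → Fin n → ℝ)
    (x : Fin n → ℝ) (k : Fin n) : ℝ :=
  (∑ i, X x i * pderiv' (fun y => Y y k) i x) -
    ∑ i, Y x i * pderiv' (fun y => X y k) i x


/-! ### Auxiliary lemmas -/

theorem pderiv'_congr {n : ℕ} {f g : (Fin n → ℝ) → ℝ} {x : Fin n → ℝ}
    (h : f =ᶠ[nhds x] g) (i : Fin n) : pderiv' f i x = pderiv' g i x := by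
  unfold pderiv'; rw [Filter.EventuallyEq.fderiv_eq h]

theorem pderiv'_sum {n : ℕ} {s : Finset (Fin n)} {f : Fin n → (Fin n → ℝ) → ℝ} {x : Fin n → ℝ}
    (h : ∀ j ∈ s, DifferentiableAt ℝ (f j) x) (i : Fin n) :
    pderiv' (fun y => ∑ j ∈ s, f j y) i x = ∑ j ∈ s, pderiv' (f j) i x := by
  unfold pderiv'
  rw [fderiv_fun_sum h]
  simp

theorem pderiv'_mul {n : ℕ} {f g : (Fin n → ℝ) → ℝ} {x : Fin n → ℝ}
    (hf : DifferentiableAt ℝ f x) (hg : DifferentiableAt ℝ g x) (i : Fin n) :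
    pderiv' (fun y => f y * g y) i x = pderiv' f i x * g x + f x * pderiv' g i x := by
  unfold pderiv'
  rw [fderiv_fun_mul hf hg]
  simp [mul_comm]
  ring

theorem pderiv'_gip {n : ℕ} {h : (Fin n → ℝ) → Matrix (Fin n) (Fin n) ℝ}
    {A B : (Fin n → ℝ) → Fin n → ℝ} {x : Fin n → ℝ}
    (hh : ∀ j k, DifferentiableAt ℝ (fun y => h y j k) x)
    (hA : ∀ j, DifferentiableAt ℝ (fun y => A y j) x)
    (hB : ∀ k, DifferentiableAt ℝ (fun y => B y k) x) (i : Fin n) :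
    pderiv' (fun y => gip h A B y) i x =
      ∑ j, ∑ k, (pderiv' (fun y => h y j k) i x * A x j * B x k
        + h x j k * pderiv' (fun y => A y j) i x * B x k
        + h x j k * A x j * pderiv' (fun y => B y k) i x) := by
  have d2 : ∀ j k, DifferentiableAt ℝ (fun y => h y j k * A y j * B y k) x :=
    fun j k => (((hh j k).mul (hA j)).mul (hB k))
  unfold gip
  rw [pderiv'_sum (fun j _ => by
    exact DifferentiableAt.fun_sum (fun k _ => d2 j k))]
  refine Finset.sum_congr rfl (fun j _ => ?_)
  rw [pderiv'_sum (fun k _ => d2 j k)]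
  refine Finset.sum_congr rfl (fun k _ => ?_)
  rw [pderiv'_mul ((hh j k).fun_mul (hA j)) (hB k), pderiv'_mul (hh j k) (hA j)]
  ring




theorem sum2_congr {n : ℕ} {f g : Fin n → Fin n → ℝ} (h : ∀ j k, f j k = g j k) :
    ∑ j, ∑ k, f j k = ∑ j, ∑ k, g j k :=
  Finset.sum_congr rfl fun j _ => Finset.sum_congr rfl fun k _ => h j k

theorem sum3_congr {n : ℕ} {f g : Fin n → Fin n → Fin n → ℝ} (h : ∀ i j k, f i j k = g i j k) :
    ∑ i, ∑ j, ∑ k, f i j k = ∑ i, ∑ j, ∑ k, g i j k :=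
  Finset.sum_congr rfl fun i _ => sum2_congr (h i)

theorem sum2_add3 {n : ℕ} (f g h : Fin n → Fin n → ℝ) :
    ∑ j, ∑ k, (f j k + g j k + h j k) =
      (∑ j, ∑ k, f j k) + (∑ j, ∑ k, g j k) + (∑ j, ∑ k, h j k) := by
  simp [Finset.sum_add_distrib]

theorem sum3_add3 {n : ℕ} (f g h : Fin n → Fin n → Fin n → ℝ) :
    ∑ i, ∑ j, ∑ k, (f i j k + g i j k + h i j k) =
      (∑ i, ∑ j, ∑ k, f i j k) + (∑ i, ∑ j, ∑ k, g i j k) + (∑ i, ∑ j, ∑ k, h i j k) := by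
  simp [Finset.sum_add_distrib]

theorem sum3_sub {n : ℕ} (f g : Fin n → Fin n → Fin n → ℝ) :
    ∑ i, ∑ j, ∑ k, (f i j k - g i j k) =
      (∑ i, ∑ j, ∑ k, f i j k) - (∑ i, ∑ j, ∑ k, g i j k) := by
  simp [Finset.sum_sub_distrib]

theorem sum_rot {n : ℕ} (f : Fin n → Fin n → Fin n → ℝ) :
    ∑ j, ∑ k, ∑ i, f i j k = ∑ i, ∑ j, ∑ k, f i j k := by
  rw [show (∑ j, ∑ k, ∑ i, f i j k) = ∑ j, ∑ i, ∑ k, f i j k from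
    Finset.sum_congr rfl fun j _ => Finset.sum_comm]
  exact Finset.sum_comm

theorem core_algebra {n : ℕ} (H : Fin n → Fin n → ℝ) (dH : Fin n → Fin n → Fin n → ℝ)
    (V Z : Fin n → ℝ) (dV dZ : Fin n → Fin n → ℝ) (G : Fin n → Fin n → Fin n → ℝ)
    (hHsym : ∀ j k, H j k = H k j)
    (hdHsym : ∀ i j k, dH i j k = dH i k j)
    (hG : ∀ j i l, ∑ k, H j k * G k i l = (1/2) * (dH i l j + dH l i j - dH j i l)) :
    (∑ i, V i * (∑ j, ∑ k, (dH i j k * Z j * Z k + H j k * dZ i j * Z k + H j k * Z j * dZ i k))) +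
      2 * (∑ j, ∑ k, H j k * ((∑ i, Z i * dV i j) - ∑ i, V i * dZ i j) * Z k) =
    2 * (∑ i, Z i * (∑ j, ∑ k, (dH i j k * V j * Z k + H j k * dV i j * Z k + H j k * V j * dZ i k))) -
      2 * (∑ j, ∑ k, H j k * V j * ((∑ i, Z i * dZ i k) + ∑ i, ∑ l, G k i l * Z i * Z l)) := by
  set S1 := ∑ i, ∑ j, ∑ k, V i * dH i j k * Z j * Z k with hS1
  set T1 := ∑ i, ∑ j, ∑ k, H j k * Z i * dV i j * Z k with hT1
  set T2 := ∑ i, ∑ j, ∑ k, H j k * V i * dZ i j * Z k with hT2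
  set U1 := ∑ i, ∑ j, ∑ k, Z i * dH i j k * V j * Z k with hU1
  set W1 := ∑ i, ∑ j, ∑ k, H j k * V j * Z i * dZ i k with hW1
  -- e1 : first LHS term = S1 + 2 T2
  have e1 : (∑ i, V i * (∑ j, ∑ k, (dH i j k * Z j * Z k + H j k * dZ i j * Z k + H j k * Z j * dZ i k)))
      = S1 + 2 * T2 := by
    have expand : ∀ i : Fin n,
        V i * (∑ j, ∑ k, (dH i j k * Z j * Z k + H j k * dZ i j * Z k + H j k * Z j * dZ i k))
        = (∑ j, ∑ k, V i * dH i j k * Z j * Z k) + (∑ j, ∑ k, H j k * V i * dZ i j * Z k)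
          + ∑ j, ∑ k, V i * (H j k * Z j * dZ i k) := by
      intro i
      rw [← sum2_add3]
      simp only [Finset.mul_sum]
      exact sum2_congr fun j k => by ring
    have swap : ∀ i : Fin n, (∑ j, ∑ k, V i * (H j k * Z j * dZ i k))
        = ∑ j, ∑ k, H j k * V i * dZ i j * Z k := by
      intro i
      rw [Finset.sum_comm]
      exact sum2_congr fun j k => by rw [hHsym k j]; ring
    calc (∑ i, V i * (∑ j, ∑ k, (dH i j k * Z j * Z k + H j k * dZ i j * Z k + H j k * Z j * dZ i k)))
        = ∑ i, ((∑ j, ∑ k, V i * dH i j k * Z j * Z k)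
            + (∑ j, ∑ k, H j k * V i * dZ i j * Z k) + ∑ j, ∑ k, H j k * V i * dZ i j * Z k) :=
          Finset.sum_congr rfl fun i _ => by rw [expand i, swap i]
      _ = S1 + 2 * T2 := by
          rw [Finset.sum_add_distrib, Finset.sum_add_distrib]
          ring
  -- e2 : bracket term = T1 - T2
  have e2 : (∑ j, ∑ k, H j k * ((∑ i, Z i * dV i j) - ∑ i, V i * dZ i j) * Z k) = T1 - T2 := by
    have expand : ∀ j k : Fin n, H j k * ((∑ i, Z i * dV i j) - ∑ i, V i * dZ i j) * Z k
        = ∑ i, (H j k * Z i * dV i j * Z k - H j k * V i * dZ i j * Z k) := by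
      intro j k
      rw [← Finset.sum_sub_distrib, Finset.mul_sum, Finset.sum_mul]
      exact Finset.sum_congr rfl fun i _ => by ring
    calc (∑ j, ∑ k, H j k * ((∑ i, Z i * dV i j) - ∑ i, V i * dZ i j) * Z k)
        = ∑ j, ∑ k, ∑ i, (H j k * Z i * dV i j * Z k - H j k * V i * dZ i j * Z k) :=
          sum2_congr expand
      _ = ∑ i, ∑ j, ∑ k, (H j k * Z i * dV i j * Z k - H j k * V i * dZ i j * Z k) :=
          sum_rot _
      _ = T1 - T2 := sum3_sub _ _
  -- e3
  have e3 : (∑ i, Z i * (∑ j, ∑ k, (dH i j k * V j * Z k + H j k * dV i j * Z k + H j k * V j * dZ i k)))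
      = U1 + T1 + W1 := by
    have expand : ∀ i : Fin n,
        Z i * (∑ j, ∑ k, (dH i j k * V j * Z k + H j k * dV i j * Z k + H j k * V j * dZ i k))
        = (∑ j, ∑ k, Z i * dH i j k * V j * Z k) + (∑ j, ∑ k, H j k * Z i * dV i j * Z k)
          + ∑ j, ∑ k, H j k * V j * Z i * dZ i k := by
      intro i
      rw [← sum2_add3]
      simp only [Finset.mul_sum]
      exact sum2_congr fun j k => by ring
    calc (∑ i, Z i * (∑ j, ∑ k, (dH i j k * V j * Z k + H j k * dV i j * Z k + H j k * V j * dZ i k)))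
        = ∑ i, ((∑ j, ∑ k, Z i * dH i j k * V j * Z k) + (∑ j, ∑ k, H j k * Z i * dV i j * Z k)
            + ∑ j, ∑ k, H j k * V j * Z i * dZ i k) := Finset.sum_congr rfl fun i _ => expand i
      _ = U1 + T1 + W1 := by rw [Finset.sum_add_distrib, Finset.sum_add_distrib]
  -- e4a
  have e4a : (∑ j, ∑ k, H j k * V j * (∑ i, Z i * dZ i k)) = W1 := by
    calc (∑ j, ∑ k, H j k * V j * (∑ i, Z i * dZ i k))
        = ∑ j, ∑ k, ∑ i, H j k * V j * Z i * dZ i k := by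
          refine sum2_congr fun j k => ?_
          rw [Finset.mul_sum]
          exact Finset.sum_congr rfl fun i _ => by ring
      _ = W1 := sum_rot _
  -- e4b
  have e4b : 2 * (∑ j, ∑ k, H j k * V j * (∑ i, ∑ l, G k i l * Z i * Z l)) = 2 * U1 - S1 := by
    have step1 : ∀ j : Fin n, (∑ k, H j k * V j * (∑ i, ∑ l, G k i l * Z i * Z l))
        = ∑ i, ∑ l, (1/2) * (dH i l j + dH l i j - dH j i l) * (V j * Z i * Z l) := by
      intro j
      calc (∑ k, H j k * V j * (∑ i, ∑ l, G k i l * Z i * Z l))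
          = ∑ k, ∑ i, ∑ l, H j k * G k i l * (V j * Z i * Z l) := by
            refine Finset.sum_congr rfl fun k _ => ?_
            simp only [Finset.mul_sum]
            exact sum2_congr fun i l => by ring
        _ = ∑ i, ∑ l, ∑ k, H j k * G k i l * (V j * Z i * Z l) :=
            (sum_rot (fun k i l => H j k * G k i l * (V j * Z i * Z l))).symm
        _ = ∑ i, ∑ l, (1/2) * (dH i l j + dH l i j - dH j i l) * (V j * Z i * Z l) := by
            refine sum2_congr fun i l => ?_
            rw [← Finset.sum_mul, hG j i l]
    have step2 : 2 * (∑ j, ∑ k, H j k * V j * (∑ i, ∑ l, G k i l * Z i * Z l))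
        = (∑ j, ∑ i, ∑ l, dH i l j * (V j * Z i * Z l))
          + (∑ j, ∑ i, ∑ l, dH l i j * (V j * Z i * Z l))
          - ∑ j, ∑ i, ∑ l, dH j i l * (V j * Z i * Z l) := by
      rw [show (∑ j, ∑ k, H j k * V j * (∑ i, ∑ l, G k i l * Z i * Z l))
          = ∑ j, ∑ i, ∑ l, (1/2) * (dH i l j + dH l i j - dH j i l) * (V j * Z i * Z l) from
        Finset.sum_congr rfl fun j _ => step1 j]
      rw [Finset.mul_sum]
      rw [show (∑ j, 2 * ∑ i, ∑ l, (1/2) * (dH i l j + dH l i j - dH j i l) * (V j * Z i * Z l))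
          = ∑ j, ∑ i, ∑ l, (dH i l j * (V j * Z i * Z l) + dH l i j * (V j * Z i * Z l)
              - dH j i l * (V j * Z i * Z l)) from
        Finset.sum_congr rfl fun j _ => by
          rw [Finset.mul_sum]
          refine Finset.sum_congr rfl fun i _ => ?_
          rw [Finset.mul_sum]
          exact Finset.sum_congr rfl fun l _ => by ring]
      simp only [Finset.sum_add_distrib, Finset.sum_sub_distrib]
    have hQa : (∑ j, ∑ i, ∑ l, dH i l j * (V j * Z i * Z l)) = U1 := by
      rw [Finset.sum_comm]
      exact sum3_congr fun i j l => by rw [hdHsym i l j]; ring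
    have hQb : (∑ j, ∑ i, ∑ l, dH l i j * (V j * Z i * Z l)) = U1 := by
      rw [sum_rot (fun a b c => dH a c b * (V b * Z c * Z a))]
      exact sum3_congr fun i j k => by rw [hdHsym i k j]; ring
    have hQc : (∑ j, ∑ i, ∑ l, dH j i l * (V j * Z i * Z l)) = S1 := by
      exact sum3_congr fun i j k => by ring
    rw [step2, hQa, hQb, hQc]
    ring
  -- assemble
  have esplit : (∑ j, ∑ k, H j k * V j * ((∑ i, Z i * dZ i k) + ∑ i, ∑ l, G k i l * Z i * Z l))
      = (∑ j, ∑ k, H j k * V j * (∑ i, Z i * dZ i k))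
        + ∑ j, ∑ k, H j k * V j * (∑ i, ∑ l, G k i l * Z i * Z l) := by
    simp only [mul_add, Finset.sum_add_distrib]
  rw [e1, e2, e3, esplit, e4a]
  linarith [e4b]


theorem gip_lam {n : ℕ} (Gh Gm Lam : Matrix (Fin n) (Fin n) ℝ)
    (hsym : ∀ i j, Gh i j = Gh j i) (hgsym : ∀ i j, Gm i j = Gm j i)
    (hg : Gm = Gh * Lam) (w yv : Fin n → ℝ) :
    ∑ i, ∑ j, Gh i j * (∑ k, Lam i k * w k) * yv j = ∑ i, ∑ j, Gm i j * w i * yv j := by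
  have key : ∀ j k, (∑ i, Gh i j * Lam i k) = Gm j k := by
    intro j k
    rw [hg, Matrix.mul_apply]
    exact Finset.sum_congr rfl fun i _ => by rw [hsym i j]
  calc ∑ i, ∑ j, Gh i j * (∑ k, Lam i k * w k) * yv j
      = ∑ i, ∑ j, ∑ k, Gh i j * Lam i k * (w k * yv j) := by
        refine sum2_congr fun i j => ?_
        rw [Finset.mul_sum, Finset.sum_mul]
        exact Finset.sum_congr rfl fun k _ => by ring
    _ = ∑ j, ∑ k, ∑ i, Gh i j * Lam i k * (w k * yv j) :=
        (sum_rot fun i j k => Gh i j * Lam i k * (w k * yv j)).symm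
    _ = ∑ j, ∑ k, (∑ i, Gh i j * Lam i k) * (w k * yv j) := by
        refine sum2_congr fun j k => ?_
        rw [Finset.sum_mul]
    _ = ∑ j, ∑ k, Gm k j * w k * yv j := by
        refine sum2_congr fun j k => ?_
        rw [key j k, hgsym j k]; ring
    _ = ∑ i, ∑ j, Gm i j * w i * yv j := Finset.sum_comm

/-- The kinetic-matching kill: `g(Px, E) = 0` when `PE = 0` and `gP` symmetric. -/
theorem kill {n : ℕ} (Gm Pm : Matrix (Fin n) (Fin n) ℝ)
    (hgsym : ∀ i j, Gm i j = Gm j i)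
    (hPsym : ∀ i j, (Gm * Pm) i j = (Gm * Pm) j i)
    (xv E : Fin n → ℝ) (hE : ∀ i, (∑ j, Pm i j * E j) = 0) :
    ∑ i, ∑ j, Gm i j * (∑ k, Pm i k * xv k) * E j = 0 := by
  have key : ∀ j k, (∑ i, Gm i j * Pm i k) = ∑ m, Gm k m * Pm m j := by
    intro j k
    have h1 : (∑ i, Gm i j * Pm i k) = (Gm * Pm) j k := by
      rw [Matrix.mul_apply]
      exact Finset.sum_congr rfl fun i _ => by rw [hgsym i j]
    rw [h1, hPsym j k, Matrix.mul_apply]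
  calc ∑ i, ∑ j, Gm i j * (∑ k, Pm i k * xv k) * E j
      = ∑ i, ∑ j, ∑ k, Gm i j * Pm i k * (xv k * E j) := by
        refine sum2_congr fun i j => ?_
        rw [Finset.mul_sum, Finset.sum_mul]
        exact Finset.sum_congr rfl fun k _ => by ring
    _ = ∑ j, ∑ k, ∑ i, Gm i j * Pm i k * (xv k * E j) :=
        (sum_rot fun i j k => Gm i j * Pm i k * (xv k * E j)).symm
    _ = ∑ j, ∑ k, ∑ m, Gm k m * Pm m j * (xv k * E j) := by
        refine sum2_congr fun j k => ?_
        rw [show (∑ i, Gm i j * Pm i k * (xv k * E j))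
            = (∑ i, Gm i j * Pm i k) * (xv k * E j) from (Finset.sum_mul _ _ _).symm,
          key j k, Finset.sum_mul]
    _ = ∑ k, ∑ m, ∑ j, Gm k m * Pm m j * (xv k * E j) := by
        rw [← sum_rot fun j k m => Gm k m * Pm m j * (xv k * E j)]
    _ = 0 := by
        refine Finset.sum_eq_zero fun k _ => Finset.sum_eq_zero fun m _ => ?_
        calc ∑ j, Gm k m * Pm m j * (xv k * E j)
            = (Gm k m * xv k) * ∑ j, Pm m j * E j := by
              rw [Finset.mul_sum]
              exact Finset.sum_congr rfl fun j _ => by ring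
          _ = 0 := by rw [hE m, mul_zero]

/-- Contraction of a metric with its inverse-Christoffel structure. -/
theorem contract {n : ℕ} (H Hinv : Matrix (Fin n) (Fin n) ℝ) (hinv : H * Hinv = 1)
    (c : Fin n → ℝ) (j : Fin n) :
    ∑ k, H j k * ((1/2) * ∑ m, Hinv k m * c m) = (1/2) * c j := by
  calc ∑ k, H j k * ((1/2) * ∑ m, Hinv k m * c m)
      = ∑ k, ∑ m, (1/2) * (H j k * Hinv k m * c m) := by
        refine Finset.sum_congr rfl fun k _ => ?_
        rw [Finset.mul_sum, Finset.mul_sum]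
        exact Finset.sum_congr rfl fun m _ => by ring
    _ = ∑ m, ∑ k, (1/2) * (H j k * Hinv k m * c m) := Finset.sum_comm
    _ = ∑ m, (1/2) * ((∑ k, H j k * Hinv k m) * c m) := by
        refine Finset.sum_congr rfl fun m _ => ?_
        rw [show ((1:ℝ)/2) * ((∑ k, H j k * Hinv k m) * c m)
            = ∑ k, (1/2) * (H j k * Hinv k m * c m) from by
          rw [Finset.sum_mul, Finset.mul_sum]]
    _ = ∑ m, (1/2) * ((1 : Matrix (Fin n) (Fin n) ℝ) j m * c m) := by -- keep
        refine Finset.sum_congr rfl fun m _ => ?_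
        rw [← Matrix.mul_apply, hinv]
    _ = (1/2) * c j := by
        simp [Matrix.one_apply, Finset.mul_sum]


theorem statement1 {n : ℕ} (U : Set (Fin n → ℝ)) (hU : IsOpen U)
    (g gh lam P : (Fin n → ℝ) → Matrix (Fin n) (Fin n) ℝ)
    -- smoothness of all the fields on `U`
    (hgsm : ∀ i j, ContDiffOn ℝ (⊤ : ℕ∞) (fun x => g x i j) U)
    (hghsm : ∀ i j, ContDiffOn ℝ (⊤ : ℕ∞) (fun x => gh x i j) U)
    (hlamsm : ∀ i j, ContDiffOn ℝ (⊤ : ℕ∞) (fun x => lam x i j) U)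
    (hPsm : ∀ i j, ContDiffOn ℝ (⊤ : ℕ∞) (fun x => P x i j) U)
    -- `g` and `ĝ` are metrics (symmetric positive definite)
    (hgpos : ∀ x ∈ U, (g x).PosDef)
    (hghpos : ∀ x ∈ U, (gh x).PosDef)
    -- `g = ĝ λ`
    (hglam : ∀ x ∈ U, g x = gh x * lam x)
    -- `P` is a `g`-orthogonal projection
    (hPP : ∀ x ∈ U, P x * P x = P x)
    (hPsym : ∀ x ∈ U, (g x * P x)ᵀ = g x * P x)
    -- kinetic-energy matching condition `P(∇_X X − ∇̂_X X) = 0` for all smooth `X`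
    (hmatch : ∀ X : (Fin n → ℝ) → Fin n → ℝ,
      (∀ k, ContDiffOn ℝ (⊤ : ℕ∞) (fun x => X x k) U) →
      ∀ x ∈ U, ∀ i, (∑ j, P x i j * (covDeriv' g X X x j - covDeriv' gh X X x j)) = 0) :
    ∀ X Z : (Fin n → ℝ) → Fin n → ℝ,
      (∀ k, ContDiffOn ℝ (⊤ : ℕ∞) (fun x => X x k) U) →
      (∀ k, ContDiffOn ℝ (⊤ : ℕ∞) (fun x => Z x k) U) →
      ∀ x ∈ U,
        (∑ i, mvec lam (mvec P X) x i * pderiv' (fun y => gip gh Z Z y) i x) +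
            2 * gip gh (lieBracket' Z (mvec lam (mvec P X))) Z x =
          2 * (∑ i, Z x i * pderiv' (fun y => gip g (mvec P X) Z y) i x) -
            2 * gip g (mvec P X) (covDeriv' g Z Z) x := by
  intro X Z hX hZ x hx
  have hmem : U ∈ nhds x := hU.mem_nhds hx
  -- differentiability at x
  have dgh : ∀ a b, DifferentiableAt ℝ (fun y => gh y a b) x :=
    fun a b => ((hghsm a b).differentiableOn (by simp)).differentiableAt hmem
  have dZ : ∀ k, DifferentiableAt ℝ (fun y => Z y k) x :=
    fun k => ((hZ k).differentiableOn (by simp)).differentiableAt hmem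
  have dX : ∀ k, DifferentiableAt ℝ (fun y => X y k) x :=
    fun k => ((hX k).differentiableOn (by simp)).differentiableAt hmem
  have dP : ∀ a b, DifferentiableAt ℝ (fun y => P y a b) x :=
    fun a b => ((hPsm a b).differentiableOn (by simp)).differentiableAt hmem
  have dlam : ∀ a b, DifferentiableAt ℝ (fun y => lam y a b) x :=
    fun a b => ((hlamsm a b).differentiableOn (by simp)).differentiableAt hmem
  have dW : ∀ k, DifferentiableAt ℝ (fun y => mvec P X y k) x := fun k => by
    show DifferentiableAt ℝ (fun y => ∑ j, P y k j * X y j) x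
    exact DifferentiableAt.fun_sum fun j _ => (dP k j).fun_mul (dX j)
  have dV : ∀ k, DifferentiableAt ℝ (fun y => mvec lam (mvec P X) y k) x := fun k => by
    show DifferentiableAt ℝ (fun y => ∑ j, lam y k j * mvec P X y j) x
    exact DifferentiableAt.fun_sum fun j _ => (dlam k j).fun_mul (dW j)
  -- symmetry
  have hghsymE : ∀ y ∈ U, ∀ a b, gh y a b = gh y b a := by
    intro y hy a b
    have h1 := (hghpos y hy).1
    calc gh y a b = (gh y)ᴴ a b := by rw [h1]
      _ = gh y b a := by simp [Matrix.conjTranspose_apply]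
  have hgsymE : ∀ y ∈ U, ∀ a b, g y a b = g y b a := by
    intro y hy a b
    have h1 := (hgpos y hy).1
    calc g y a b = (g y)ᴴ a b := by rw [h1]
      _ = g y b a := by simp [Matrix.conjTranspose_apply]
  have hPsymE : ∀ a b, (g x * P x) a b = (g x * P x) b a := by
    intro a b
    calc (g x * P x) a b = (g x * P x)ᵀ b a := (Matrix.transpose_apply _ _ _).symm
      _ = (g x * P x) b a := by rw [hPsym x hx]
  have hdHsym : ∀ i a b, pderiv' (fun y => gh y a b) i x = pderiv' (fun y => gh y b a) i x :=
    fun i a b =>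
      pderiv'_congr (Filter.eventuallyEq_of_mem hmem fun y hy => hghsymE y hy a b) i
  -- inverse of ĝ
  have hinv : gh x * (gh x)⁻¹ = 1 :=
    Matrix.mul_nonsing_inv _ (isUnit_iff_ne_zero.mpr (hghpos x hx).det_pos.ne')
  -- Christoffel contraction
  have hG : ∀ j i l, (∑ k, gh x j k * christoffel gh k i l x) =
      (1/2) * (pderiv' (fun y => gh y l j) i x + pderiv' (fun y => gh y i j) l x
        - pderiv' (fun y => gh y i l) j x) := by
    intro j i l
    simp only [christoffel]
    exact contract (gh x) (gh x)⁻¹ hinv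
      (fun m => pderiv' (fun y => gh y l m) i x + pderiv' (fun y => gh y i m) l x
        - pderiv' (fun y => gh y i l) m x) j
  -- g(PX, ·) = ĝ(λPX, ·)
  have heqfun : ∀ y ∈ U, gip g (mvec P X) Z y = gip gh (mvec lam (mvec P X)) Z y := by
    intro y hy
    exact (gip_lam (gh y) (g y) (lam y) (hghsymE y hy) (hgsymE y hy) (hglam y hy)
      (fun k => mvec P X y k) (fun j => Z y j)).symm
  have hpd : ∀ i, pderiv' (fun y => gip g (mvec P X) Z y) i x
      = pderiv' (fun y => gip gh (mvec lam (mvec P X)) Z y) i x :=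
    fun i => pderiv'_congr (Filter.eventuallyEq_of_mem hmem fun y hy => heqfun y hy) i
  -- kinetic matching: replace ∇ by ∇̂ in the last term
  have hkill : gip g (mvec P X) (covDeriv' g Z Z) x
      = gip g (mvec P X) (covDeriv' gh Z Z) x := by
    have h0 : (∑ i, ∑ j, g x i j * (∑ k, P x i k * X x k) *
        (covDeriv' g Z Z x j - covDeriv' gh Z Z x j)) = 0 :=
      kill (g x) (P x) (hgsymE x hx) hPsymE (fun k => X x k)
        (fun j => covDeriv' g Z Z x j - covDeriv' gh Z Z x j) (hmatch Z hZ x hx)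
    have hsplit : gip g (mvec P X) (covDeriv' g Z Z) x
        - gip g (mvec P X) (covDeriv' gh Z Z) x
        = ∑ i, ∑ j, g x i j * (∑ k, P x i k * X x k) *
            (covDeriv' g Z Z x j - covDeriv' gh Z Z x j) := by
      simp only [gip, mvec]
      rw [← Finset.sum_sub_distrib]
      refine Finset.sum_congr rfl fun i _ => ?_
      rw [← Finset.sum_sub_distrib]
      exact Finset.sum_congr rfl fun j _ => by ring
    linarith [hsplit, h0]
  have hlamconv : gip g (mvec P X) (covDeriv' gh Z Z) x
      = gip gh (mvec lam (mvec P X)) (covDeriv' gh Z Z) x :=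
    (gip_lam (gh x) (g x) (lam x) (hghsymE x hx) (hgsymE x hx) (hglam x hx)
      (fun k => mvec P X x k) (fun j => covDeriv' gh Z Z x j)).symm
  -- expansions of the two derivative terms
  have hA : (∑ i, mvec lam (mvec P X) x i * pderiv' (fun y => gip gh Z Z y) i x)
      = ∑ i, mvec lam (mvec P X) x i * (∑ j, ∑ k,
          (pderiv' (fun y => gh y j k) i x * Z x j * Z x k
            + gh x j k * pderiv' (fun y => Z y j) i x * Z x k
            + gh x j k * Z x j * pderiv' (fun y => Z y k) i x)) :=
    Finset.sum_congr rfl fun i _ => by rw [pderiv'_gip dgh dZ dZ i]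
  have hC : (∑ i, Z x i * pderiv' (fun y => gip g (mvec P X) Z y) i x)
      = ∑ i, Z x i * (∑ j, ∑ k,
          (pderiv' (fun y => gh y j k) i x * mvec lam (mvec P X) x j * Z x k
            + gh x j k * pderiv' (fun y => mvec lam (mvec P X) y j) i x * Z x k
            + gh x j k * mvec lam (mvec P X) x j * pderiv' (fun y => Z y k) i x)) :=
    Finset.sum_congr rfl fun i _ => by rw [hpd i, pderiv'_gip dgh dV dZ i]
  rw [hA, hC, hkill, hlamconv]
  simp only [gip, lieBracket', covDeriv']
  exact core_algebra (fun j k => gh x j k)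
    (fun i a b => pderiv' (fun y => gh y a b) i x)
    (fun i => mvec lam (mvec P X) x i) (fun i => Z x i)
    (fun i j => pderiv' (fun y => mvec lam (mvec P X) y j) i x)
    (fun i k => pderiv' (fun y => Z y k) i x)
    (fun k i l => christoffel gh k i l x)
    (hghsymE x hx) hdHsym hG
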